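/- If f is a resolving broadcast for a graph G of order n with support of size y, then y + ∏_{v ∈ supp(f)} (f(v)+1) ≥ n. -/

import Mathlib

open SimpleGraph Finset

variable {V : Type*}

/-- truncated distance `d_k(x,y) = min(d(x,y), k+1)` with `d = ∞` across components. -/
noncomputable def truncDist (G : SimpleGraph V) (k : ℕ) (x y : V) : ℕ∞ :=
  min (G.edist x y) (k + 1)

/-- `f` is a resolving broadcast of `G`. -/
def IsResolvingBroadcast (G : SimpleGraph V) (f : V → ℕ) : Prop :=
  ∀ x y : V, x ≠ y → ∃ z : V, 0 < f z ∧ truncDist G (f z) x z ≠ truncDist G (f z) y z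

/-- broadcast dimension -/
noncomputable def bdim (G : SimpleGraph V) [Fintype V] : ℕ :=
  sInf {c : ℕ | ∃ f : V → ℕ, IsResolvingBroadcast G f ∧ ∑ v, f v = c}

/-- adjacency resolving set -/
def IsAdjResolvingSet (G : SimpleGraph V) (S : Set V) : Prop :=
  ∀ x y : V, x ≠ y → ∃ z ∈ S, truncDist G 1 x z ≠ truncDist G 1 y z

/-- adjacency dimension -/
noncomputable def adim (G : SimpleGraph V) [Fintype V] : ℕ :=
  sInf {n : ℕ | ∃ S : Finset V, IsAdjResolvingSet G ↑S ∧ S.card = n}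

/-- resolving set (metric dimension) -/
def IsResolvingSet (G : SimpleGraph V) (S : Set V) : Prop :=
  ∀ x y : V, x ≠ y → ∃ z ∈ S, G.edist x z ≠ G.edist y z

/-- metric dimension -/
noncomputable def mdim (G : SimpleGraph V) [Fintype V] : ℕ :=
  sInf {n : ℕ | ∃ S : Finset V, IsResolvingSet G ↑S ∧ S.card = n}

theorem stmt_11 {V : Type*} [Fintype V] [DecidableEq V] (G : SimpleGraph V)
    (f : V → ℕ) (hf : IsResolvingBroadcast G f) :
    Fintype.card V ≤ (Finset.univ.filter fun v => 0 < f v).card +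
      ∏ v ∈ Finset.univ.filter (fun v => 0 < f v), (f v + 1) := by
  classical
  set S : Finset V := Finset.univ.filter fun v => 0 < f v with hS
  have hcard : Fintype.card V = S.card + Sᶜ.card := by
    rw [Finset.card_add_card_compl]
  rw [hcard]
  apply Nat.add_le_add_left
  -- injection from Sᶜ into Π z : S, Fin (f z + 1)
  have key : ∀ (x : V), x ∉ S → ∀ z : V, z ∈ S →
      1 ≤ truncDist G (f z) x z ∧ truncDist G (f z) x z ≠ ⊤ ∧
        (truncDist G (f z) x z).toNat ≤ f z + 1 := by
    intro x hx z hz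
    have hxz : x ≠ z := by
      rintro rfl; exact hx hz
    have h1 : (1 : ℕ∞) ≤ truncDist G (f z) x z := by
      refine le_min ?_ ?_
      · rw [ENat.one_le_iff_ne_zero]
        simp [SimpleGraph.edist_eq_zero_iff, hxz]
      · exact_mod_cast Nat.le_add_left 1 (f z)
    have hle : truncDist G (f z) x z ≤ ((f z + 1 : ℕ) : ℕ∞) := by
      exact_mod_cast min_le_right _ _
    have hne : truncDist G (f z) x z ≠ ⊤ :=
      ne_top_of_le_ne_top (ENat.coe_ne_top _) hle
    refine ⟨h1, hne, ?_⟩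
    have := ENat.toNat_le_toNat hle (ENat.coe_ne_top _)
    simpa only [ENat.toNat_coe] using this
  let g : {v : V // v ∈ Sᶜ} → (z : {v : V // v ∈ S}) → Fin (f z.1 + 1) := fun x z =>
    ⟨(truncDist G (f z.1) x.1 z.1).toNat - 1, by
      have := (key x.1 (Finset.mem_compl.mp x.2) z.1 z.2).2.2
      omega⟩
  have hginj : Function.Injective g := by
    rintro ⟨x, hx⟩ ⟨y, hy⟩ hgxy
    have hx' : x ∉ S := by simpa using hx
    have hy' : y ∉ S := by simpa using hy
    ext
    by_contra hxy
    obtain ⟨z, hzpos, hzd⟩ := hf x y hxy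
    have hzS : z ∈ S := by simp [hS, hzpos]
    have := congrFun hgxy ⟨z, hzS⟩
    have hval : (truncDist G (f z) x z).toNat - 1 = (truncDist G (f z) y z).toNat - 1 :=
      congrArg Fin.val this
    obtain ⟨h1x, hnex, -⟩ := key x hx' z hzS
    obtain ⟨h1y, hney, -⟩ := key y hy' z hzS
    have h1x' : 1 ≤ (truncDist G (f z) x z).toNat := by
      simpa using ENat.toNat_le_toNat h1x hnex
    have h1y' : 1 ≤ (truncDist G (f z) y z).toNat := by
      simpa using ENat.toNat_le_toNat h1y hney
    have : (truncDist G (f z) x z).toNat = (truncDist G (f z) y z).toNat := by omega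
    exact hzd (by rw [← ENat.coe_toNat hnex, ← ENat.coe_toNat hney, this])
  calc Sᶜ.card = Fintype.card {v : V // v ∈ Sᶜ} := (Fintype.card_coe _).symm
    _ ≤ Fintype.card ((z : {v : V // v ∈ S}) → Fin (f z.1 + 1)) :=
        Fintype.card_le_of_injective g hginj
    _ = ∏ z ∈ S, (f z + 1) := by
        rw [Fintype.card_pi]
        simp [Finset.prod_attach S (fun z => f z + 1)]
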